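/- Let x_1, …, x_N ∈ ℝ^d with weights w_1, …, w_N ≥ 0 and z_1, …, z_n ∈ ℝ^d with weights u_1, …, u_n ≥ 0 satisfy (i) Σ_j u_j φ0(z_j) = Σ_i w_i φ0(x_i) in H0, (ii) Σ_j u_j = Σ_i w_i, and (iii) Σ_j u_j ‖φ1(z_j)‖ ≤ Σ_i w_i ‖φ1(x_i)‖ (a 'proper kernel recombination'). Then ‖ Σ_i w_i (φ0(x_i), φ1(x_i)) − Σ_j u_j (φ0(z_j), φ1(z_j)) ‖_{H0 × H1} ≤ 2 Σ_i w_i ‖φ1(x_i)‖. -/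

import Mathlib

/-- Let `x_1, …, x_N ∈ ℝ^d` with weights `w_i ≥ 0` and
`z_1, …, z_n ∈ ℝ^d` with weights `u_j ≥ 0` satisfy
(i) `Σ_j u_j φ0(z_j) = Σ_i w_i φ0(x_i)` in `H0`, (ii) `Σ_j u_j = Σ_i w_i`, and
(iii) `Σ_j u_j ‖φ1(z_j)‖ ≤ Σ_i w_i ‖φ1(x_i)‖` (a *proper kernel recombination*).
Then `‖Σ_i w_i (φ0(x_i), φ1(x_i)) − Σ_j u_j (φ0(z_j), φ1(z_j))‖ ≤ 2 Σ_i w_i ‖φ1(x_i)‖`,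
the norm being taken in the (Hilbertian, i.e. `L²`) product `H0 × H1`. -/
theorem statement4
    {d N n : ℕ}
    {H0 H1 : Type*} [NormedAddCommGroup H0] [InnerProductSpace ℝ H0]
    [NormedAddCommGroup H1] [InnerProductSpace ℝ H1]
    (φ0 : (Fin d → ℝ) → H0) (φ1 : (Fin d → ℝ) → H1)
    (x : Fin N → (Fin d → ℝ)) (w : Fin N → ℝ)
    (z : Fin n → (Fin d → ℝ)) (u : Fin n → ℝ)
    (hw : ∀ i, 0 ≤ w i) (hu : ∀ j, 0 ≤ u j)
    (hmatch : ∑ j, u j • φ0 (z j) = ∑ i, w i • φ0 (x i))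
    (hmass : ∑ j, u j = ∑ i, w i)
    (hdiag : ∑ j, u j * ‖φ1 (z j)‖ ≤ ∑ i, w i * ‖φ1 (x i)‖) :
    ‖(∑ i, w i • ((WithLp.equiv 2 (H0 × H1)).symm (φ0 (x i), φ1 (x i))))
        - ∑ j, u j • ((WithLp.equiv 2 (H0 × H1)).symm (φ0 (z j), φ1 (z j)))‖
      ≤ 2 * ∑ i, w i * ‖φ1 (x i)‖ := by
  have key : (∑ i, w i • ((WithLp.equiv 2 (H0 × H1)).symm (φ0 (x i), φ1 (x i))))
        - ∑ j, u j • ((WithLp.equiv 2 (H0 × H1)).symm (φ0 (z j), φ1 (z j)))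
      = (WithLp.equiv 2 (H0 × H1)).symm
          (0, (∑ i, w i • φ1 (x i)) - ∑ j, u j • φ1 (z j)) := by
    have hsymm : ∀ p : H0 × H1, (WithLp.equiv 2 (H0 × H1)).symm p
        = (WithLp.linearEquiv 2 ℝ (H0 × H1)).symm p := fun _ => rfl
    simp only [hsymm, ← map_smul, ← map_sum, ← map_sub]
    congr 1
    rw [Prod.ext_iff]
    constructor
    · simp [Prod.fst_sum, hmatch]
    · simp [Prod.snd_sum]
  rw [key, WithLp.equiv_symm_apply, WithLp.norm_toLp_snd]
  have h1 : ‖∑ i, w i • φ1 (x i)‖ ≤ ∑ i, w i * ‖φ1 (x i)‖ := by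
    refine (norm_sum_le _ _).trans ?_
    simp [norm_smul, abs_of_nonneg (hw _)]
  have h2 : ‖∑ j, u j • φ1 (z j)‖ ≤ ∑ j, u j * ‖φ1 (z j)‖ := by
    refine (norm_sum_le _ _).trans ?_
    simp [norm_smul, abs_of_nonneg (hu _)]
  calc ‖(∑ i, w i • φ1 (x i)) - ∑ j, u j • φ1 (z j)‖
      ≤ ‖∑ i, w i • φ1 (x i)‖ + ‖∑ j, u j • φ1 (z j)‖ := norm_sub_le _ _
    _ ≤ (∑ i, w i * ‖φ1 (x i)‖) + ∑ j, u j * ‖φ1 (z j)‖ := add_le_add h1 h2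
    _ ≤ (∑ i, w i * ‖φ1 (x i)‖) + ∑ i, w i * ‖φ1 (x i)‖ := by linarith
    _ = 2 * ∑ i, w i * ‖φ1 (x i)‖ := by ring
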